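/- Let G be a group of order n², U a subgroup of order n, and P a regular (n,r) Latin square type PDS in G with P ∩ U = ∅. Then |P ∩ Ug| = r for every coset Ug ≠ U of U in G. -/

import Mathlib

open Finset BigOperators Pointwise

variable {G : Type*}

/-- Number of ordered pairs `(x,y)` with `x,y ∈ D`, `x ≠ y`, `x * y⁻¹ = g`. -/
noncomputable def diffCount [Group G] (D : Set G) (g : G) : ℕ :=
  Nat.card {p : G × G // p.1 ∈ D ∧ p.2 ∈ D ∧ p.1 ≠ p.2 ∧ p.1 * p.2⁻¹ = g}

/-- `D` is a `(v,k,λ,μ)` partial difference set in `G`. -/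
def IsPDS [Group G] (D : Set G) (v k : ℕ) (l m : ℤ) : Prop :=
  Nat.card G = v ∧ Nat.card D = k ∧
    ∀ g : G, g ≠ 1 →
      (g ∈ D → (diffCount D g : ℤ) = l) ∧ (g ∉ D → (diffCount D g : ℤ) = m)

/-- A regular PDS: a PDS avoiding the identity and closed under inversion. -/
def IsRegularPDS [Group G] (D : Set G) (v k : ℕ) (l m : ℤ) : Prop :=
  IsPDS D v k l m ∧ (1 : G) ∉ D ∧ D⁻¹ = D

/-- A regular `(n,r)` Latin square type PDS. -/
def IsLatinPDS [Group G] (D : Set G) (n r : ℕ) : Prop :=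
  IsRegularPDS D (n ^ 2) (r * (n - 1)) ((n : ℤ) + (r : ℤ) ^ 2 - 3 * r) ((r : ℤ) ^ 2 - r)

/-- A regular `(n,r)` negative Latin square type PDS. -/
def IsNegLatinPDS [Group G] (D : Set G) (n r : ℕ) : Prop :=
  IsRegularPDS D (n ^ 2) (r * (n + 1)) (-(n : ℤ) + (r : ℤ) ^ 2 + 3 * r) ((r : ℤ) ^ 2 + r)

/-- Character sum `χ(D) = ∑_{d ∈ D} χ(d)`. -/
noncomputable def charSum [Group G] (χ : G →* ℂˣ) (D : Set G) : ℂ :=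
  ∑ᶠ d ∈ D, (χ d : ℂ)

/-- The multiset of character sums `{χ(P 0), …, χ(P (t-1))}`. -/
noncomputable def charMultiset [Group G] {t : ℕ} (χ : G →* ℂˣ) (P : Fin t → Set G) :
    Multiset ℂ :=
  (Finset.univ.val : Multiset (Fin t)).map fun i => charSum χ (P i)

/-- `χ` is principal on the subgroup `U`. -/
def IsPrincipalOn [Group G] (χ : G →* ℂˣ) (U : Subgroup G) : Prop :=
  ∀ u ∈ U, χ u = 1

/-- A `(c,t)` LP-packing in `G` relative to `U`. -/
def IsLPPacking [CommGroup G] (c t : ℕ) (P : Fin t → Set G) (U : Subgroup G) : Prop :=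
  Nat.card G = t ^ 2 * c ^ 2 ∧ Nat.card U = t * c ∧
    (∀ i, IsLatinPDS (P i) (t * c) c) ∧
    (∀ i j, i ≠ j → Disjoint (P i) (P j)) ∧
    (⋃ i, P i) = Set.univ \ (U : Set G)

/-- A `(c,t-1)` NLP-packing in `G`. -/
def IsNLPPacking [CommGroup G] (c t : ℕ) (P : Fin (t - 1) → Set G) : Prop :=
  Nat.card G = t ^ 2 * c ^ 2 ∧
    (∀ i, IsNegLatinPDS (P i) (t * c) c) ∧
    IsNegLatinPDS (Set.univ \ ({1} ∪ ⋃ i, P i)) (t * c) (c - 1)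

/-- A `(c,t)` LP-partition in `G − V` relative to `H`. -/
def IsLPPartition [CommGroup G] (c t : ℕ) (R : Fin t → Set G) (V H : Subgroup G) : Prop :=
  Nat.card G = t ^ 2 * c ^ 2 ∧ Nat.card V = t * c ^ 2 ∧ H ≤ V ∧
    (∀ i, Nat.card (R i) = (t - 1) * c ^ 2) ∧
    (∀ i j, i ≠ j → Disjoint (R i) (R j)) ∧
    (⋃ i, R i) = Set.univ \ (V : Set G) ∧
    ∀ χ : G →* ℂˣ, χ ≠ 1 →
      (IsPrincipalOn χ V → charMultiset χ R = Multiset.replicate t (-(c : ℂ) ^ 2)) ∧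
      (¬ IsPrincipalOn χ V → IsPrincipalOn χ H →
        charMultiset χ R = Multiset.replicate t 0) ∧
      (¬ IsPrincipalOn χ H →
        charMultiset χ R = ((t : ℂ) - 1) * (c : ℂ) ::ₘ Multiset.replicate (t - 1) (-(c : ℂ)))

set_option maxHeartbeats 1000000 in
theorem stmt_8 {G : Type*} [Group G] [Finite G] (n r : ℕ)
    (U : Subgroup G) (hG : Nat.card G = n ^ 2) (hU : Nat.card U = n)
    (P : Set G) (hP : IsLatinPDS P n r) (hPU : P ∩ (U : Set G) = ∅) :
    ∀ g : G, (U : Set G) * ({g} : Set G) ≠ (U : Set G) →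
      Nat.card (P ∩ ((U : Set G) * ({g} : Set G)) : Set G) = r := by
  classical
  cases nonempty_fintype G
  obtain ⟨⟨hGcard, hPcard, hcount⟩, h1P, hinvP⟩ := hP
  have hPU' : ∀ x, x ∈ P → x ∉ U := by
    intro x hx hxU
    have : x ∈ P ∩ (U : Set G) := ⟨hx, hxU⟩
    rw [hPU] at this; exact this
  have hn : 1 ≤ n := by
    by_contra h
    push_neg at h
    interval_cases n
    have := Nat.card_pos (α := G)
    omega
  set s := QuotientGroup.rightRel U with hs
  haveI : Fintype (Quotient s) := Fintype.ofFinite _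
  set qm : G → Quotient s := Quotient.mk s with hqm
  have hq : ∀ x y : G, qm x = qm y ↔ x * y⁻¹ ∈ U := by
    intro x y
    constructor
    · intro h
      have h2 := QuotientGroup.rightRel_apply.mp (Quotient.exact h)
      simpa [mul_inv_rev] using U.inv_mem h2
    · intro h
      exact Quotient.sound (QuotientGroup.rightRel_apply.mpr
        (by simpa [mul_inv_rev] using U.inv_mem h))
  have hcos : ∀ g x : G, x ∈ (U : Set G) * ({g} : Set G) ↔ x * g⁻¹ ∈ U := by
    intro g x
    rw [Set.mem_mul]
    constructor
    · rintro ⟨u, hu, y, hy, rfl⟩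
      simp only [Set.mem_singleton_iff] at hy
      subst hy
      simpa using hu
    · intro h
      exact ⟨x * g⁻¹, h, g, rfl, by group⟩
  set Pf : Finset G := P.toFinset with hPf
  set a : Quotient s → ℕ := fun q => (Pf.filter (fun x => qm x = q)).card with ha
  have hPfcard : Pf.card = r * (n - 1) := by
    rw [hPf, Set.toFinset_card, ← Nat.card_eq_fintype_card]
    exact hPcard
  have hsuma : ∑ q, a q = r * (n - 1) := by
    rw [← hPfcard]
    exact (Finset.card_eq_sum_card_fiberwise (f := qm) (fun x _ => Finset.mem_univ _)).symm
  have ha1 : a (qm 1) = 0 := by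
    rw [ha]
    simp only [Finset.card_eq_zero, Finset.filter_eq_empty_iff]
    intro x hx h
    have hxU : x ∈ U := by simpa using (hq x 1).mp h
    exact hPU' x (by simpa [hPf] using hx) hxU
  set D : Finset (G × G) :=
    (Pf ×ˢ Pf).filter (fun p => p.1 ≠ p.2 ∧ p.1 * p.2⁻¹ ∈ U) with hD
  set Uf : Finset G := (U : Set G).toFinset with hUf
  have hUfcard : Uf.card = n := by
    rw [hUf, Set.toFinset_card, ← Nat.card_eq_fintype_card]
    simpa using hU
  have hDcard1 : D.card = ∑ u ∈ Uf.erase 1, (D.filter (fun p => p.1 * p.2⁻¹ = u)).card := by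
    refine Finset.card_eq_sum_card_fiberwise (s := D) (t := Uf.erase 1)
      (f := fun p : G × G => p.1 * p.2⁻¹) ?_
    intro p hp
    rw [Finset.mem_coe]
    rw [hD, Finset.mem_coe, Finset.mem_filter] at hp
    obtain ⟨hmem, hne, hUm⟩ := hp
    refine Finset.mem_erase.mpr ⟨?_, by simp [hUf, hUm]⟩
    intro h
    exact hne (by rwa [mul_inv_eq_one] at h)
  have hfiber1 : ∀ u ∈ Uf.erase 1,
      (D.filter (fun p => p.1 * p.2⁻¹ = u)).card = diffCount P u := by
    intro u hu
    have huU : u ∈ U := by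
      have := Finset.mem_of_mem_erase hu
      rw [hUf] at this
      simpa using this
    rw [diffCount, Nat.card_eq_fintype_card, Fintype.card_subtype]
    congr 1
    ext p
    simp only [hD, Finset.mem_filter, Finset.mem_product, Finset.mem_univ, true_and,
      hPf, Set.mem_toFinset]
    constructor
    · rintro ⟨⟨⟨h1, h2⟩, h3, h4⟩, h5⟩
      exact ⟨h1, h2, h3, h5⟩
    · rintro ⟨h1, h2, h3, h5⟩
      exact ⟨⟨⟨h1, h2⟩, h3, h5 ▸ huU⟩, h5⟩
  have hDint : (D.card : ℤ) = ((n : ℤ) - 1) * ((r : ℤ) ^ 2 - r) := by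
    have hconst : ∀ u ∈ Uf.erase 1, (diffCount P u : ℤ) = (r : ℤ) ^ 2 - r := by
      intro u hu
      rw [Finset.mem_erase] at hu
      have huU : u ∈ U := by
        have := hu.2
        rw [hUf] at this
        simpa using this
      exact (hcount u hu.1).2 (fun h => hPU' u h huU)
    calc (D.card : ℤ) = ∑ u ∈ Uf.erase 1, (diffCount P u : ℤ) := by
          rw [hDcard1]
          push_cast
          exact Finset.sum_congr rfl (fun u hu => by rw [hfiber1 u hu])
      _ = ((Uf.erase 1).card : ℤ) * ((r : ℤ) ^ 2 - r) := by
          rw [Finset.sum_congr rfl hconst, Finset.sum_const, nsmul_eq_mul]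
      _ = ((n : ℤ) - 1) * ((r : ℤ) ^ 2 - r) := by
          rw [Finset.card_erase_of_mem (by rw [hUf, Set.mem_toFinset]; exact U.one_mem), hUfcard, Nat.cast_sub hn]
          norm_num
  have hcast : ∀ m : ℕ, ((m * m - m : ℕ) : ℤ) = (m : ℤ) * m - m := by
    intro m
    have : m ≤ m * m := by nlinarith
    rw [Nat.cast_sub this]
    push_cast
    ring
  have hDcard2 : D.card = ∑ q, (D.filter (fun p => qm p.1 = q)).card :=
    Finset.card_eq_sum_card_fiberwise (fun p _ => Finset.mem_univ _)
  have hfiber2 : ∀ q, (D.filter (fun p => qm p.1 = q)).card = a q * a q - a q := by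
    intro q
    have heq : D.filter (fun p => qm p.1 = q) = (Pf.filter (fun x => qm x = q)).offDiag := by
      ext p
      simp only [hD, Finset.mem_filter, Finset.mem_product, Finset.mem_offDiag]
      constructor
      · rintro ⟨⟨⟨h1, h2⟩, h3, h4⟩, h5⟩
        exact ⟨⟨h1, h5⟩, ⟨h2, ((hq p.1 p.2).mpr h4).symm.trans h5⟩, h3⟩
      · rintro ⟨⟨h1, h5⟩, ⟨h2, h6⟩, h3⟩
        exact ⟨⟨⟨h1, h2⟩, h3, (hq p.1 p.2).mp (h5.trans h6.symm)⟩, h5⟩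
    rw [heq, Finset.offDiag_card]
  have hsum2 : (∑ q, ((a q : ℤ) ^ 2 - a q)) = ((n : ℤ) - 1) * ((r : ℤ) ^ 2 - r) := by
    rw [← hDint, hDcard2, Nat.cast_sum]
    refine Finset.sum_congr rfl fun q _ => ?_
    rw [hfiber2 q, hcast (a q)]
    ring
  have hQcard : Fintype.card (Quotient s) = n := by
    have h1 : Nat.card (Quotient s) = Nat.card (G ⧸ U) :=
      Nat.card_congr (QuotientGroup.quotientRightRelEquivQuotientLeftRel U)
    have h2 := Subgroup.card_eq_card_quotient_mul_card_subgroup U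
    rw [hG, hU] at h2
    rw [← Nat.card_eq_fintype_card, h1]
    have h3 : Nat.card (G ⧸ U) * n = n * n := by rw [← h2]; ring
    exact Nat.eq_of_mul_eq_mul_right (by omega) h3
  set S : Finset (Quotient s) := Finset.univ.erase (qm 1) with hS
  have hScard : S.card = n - 1 := by
    rw [hS, Finset.card_erase_of_mem (Finset.mem_univ _), Finset.card_univ, hQcard]
  have hsumaS : ∑ q ∈ S, a q = r * (n - 1) := by
    rw [hS, Finset.sum_erase _ ha1, hsuma]
  have hsum2S : (∑ q ∈ S, ((a q : ℤ) ^ 2 - a q)) = ((n : ℤ) - 1) * ((r : ℤ) ^ 2 - r) := by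
    rw [hS, Finset.sum_erase _ (by simp [ha1]), hsum2]
  have hsumaSZ : (∑ q ∈ S, (a q : ℤ)) = (r : ℤ) * ((n : ℤ) - 1) := by
    rw [← Nat.cast_sum, hsumaS, Nat.cast_mul, Nat.cast_sub hn]
    norm_num
  have hzero : ∑ q ∈ S, ((a q : ℤ) - r) ^ 2 = 0 := by
    calc ∑ q ∈ S, ((a q : ℤ) - r) ^ 2
        = ∑ q ∈ S, (((a q : ℤ) ^ 2 - a q) + (1 - 2 * r) * (a q) + (r : ℤ) ^ 2) :=
          Finset.sum_congr rfl (fun q _ => by ring)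
      _ = (∑ q ∈ S, ((a q : ℤ) ^ 2 - a q)) + (1 - 2 * r) * (∑ q ∈ S, (a q : ℤ))
            + (S.card : ℤ) * (r : ℤ) ^ 2 := by
          rw [Finset.sum_add_distrib, Finset.sum_add_distrib, Finset.mul_sum,
            Finset.sum_const, nsmul_eq_mul]
      _ = 0 := by
          rw [hsum2S, hsumaSZ, hScard, Nat.cast_sub hn]
          push_cast
          ring
  have hkey : ∀ q ∈ S, (a q : ℤ) = r := by
    intro q hqS
    have h2 := (Finset.sum_eq_zero_iff_of_nonneg (fun q _ => sq_nonneg _)).mp hzero q hqS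
    have h3 := pow_eq_zero_iff (n := 2) (by norm_num) |>.mp h2
    linarith [h3]
  intro g hg
  have hgS : qm g ∈ S := by
    rw [hS, Finset.mem_erase]
    refine ⟨?_, Finset.mem_univ _⟩
    intro h
    apply hg
    have hgU : g ∈ U := by simpa using (hq g 1).mp h
    ext x
    rw [hcos g x]
    constructor
    · intro hx
      have := U.mul_mem hx hgU
      simpa using this
    · intro hx
      exact U.mul_mem (by simpa using hx) (U.inv_mem hgU)
  have hval : a (qm g) = r := by exact_mod_cast hkey _ hgS
  rw [← hval, ha, Nat.card_eq_fintype_card, ← Set.toFinset_card]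
  congr 1
  ext x
  simp only [Set.mem_toFinset, Set.mem_inter_iff, Finset.mem_filter, hPf]
  rw [hcos g x, hq x g]
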